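/- Let ρ be an unbounded ordinal metric on X and k ∈ ω. For every l ∈ ω and every infinite family A of pairwise disjoint l-element subsets of X, there is an infinite B ⊆ A such that for all distinct a, b ∈ B and all α ∈ a, β ∈ b, one has ρ(α,β) > k. -/

import Mathlib

def IsOrdinalMetric (X : Set Ordinal) (ρ : Ordinal → Ordinal → ℕ) : Prop :=
  (∀ α ∈ X, ∀ β ∈ X, (ρ α β = 0 ↔ α = β)) ∧
  (∀ α ∈ X, ∀ β ∈ X, ρ α β = ρ β α) ∧
  (∀ α ∈ X, ∀ β ∈ X, ∀ γ ∈ X, α ≤ β → α ≤ γ → ρ α β ≤ max (ρ α γ) (ρ β γ)) ∧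
  (∀ β ∈ X, ∀ k : ℕ, {α | α ∈ X ∧ α ≤ β ∧ ρ α β ≤ k}.Finite)

/-- `ρ` is unbounded if every infinite subset of `X` contains pairs of arbitrarily
large `ρ`-distance. -/
def UnboundedMetric (X : Set Ordinal) (ρ : Ordinal → Ordinal → ℕ) : Prop :=
  ∀ k : ℕ, ∀ A : Set Ordinal, A ⊆ X → A.Infinite → ∃ α ∈ A, ∃ β ∈ A, k < ρ α β

lemma ultra_fix {κ : Type*} [Finite κ] (φ : ℕ → κ) :
    ∃ q : κ, {n | φ n = q} ∈ Filter.hyperfilter ℕ := by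
  obtain ⟨q, hq⟩ := Ultrafilter.eq_pure_of_finite ((Filter.hyperfilter ℕ).map φ)
  refine ⟨q, ?_⟩
  have : {q} ∈ (Filter.hyperfilter ℕ).map φ := by rw [hq]; exact rfl
  simpa [Set.preimage, Set.mem_singleton_iff] using this

lemma infinite_ramsey_pairs {κ : Type*} [Finite κ] (c : ℕ → ℕ → κ) :
    ∃ g : ℕ → ℕ, StrictMono g ∧ ∃ q : κ, ∀ m n, m < n → c (g m) (g n) = q := by
  set U := Filter.hyperfilter ℕ with hU
  choose q hq using fun m => ultra_fix (c m)
  obtain ⟨q', hq'⟩ := ultra_fix q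
  have main : ∀ s : Finset ℕ, (∀ x ∈ s, q x = q') →
      ∃ y, q y = q' ∧ ∀ x ∈ s, x < y ∧ c x y = q' := by
    intro s hs
    have h1 : {n | q n = q'} ∈ U := hq'
    have h2 : (⋂ x ∈ (s : Set ℕ), {n | c x n = q x}) ∈ U := by
      apply (Filter.biInter_mem s.finite_toSet).2
      intro x _; exact hq x
    have h3 : {n : ℕ | ∀ x ∈ s, x < n} ∈ U := by
      apply Filter.hyperfilter_le_cofinite
      have : {n : ℕ | ∀ x ∈ s, x < n}ᶜ ⊆ Set.Iic (s.sup id) := by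
        intro n hn
        simp only [Set.mem_compl_iff, Set.mem_setOf_eq, not_forall] at hn
        obtain ⟨x, hx, hxn⟩ := hn
        exact le_trans (not_lt.1 hxn) (Finset.le_sup (f := id) hx)
      exact Set.Finite.subset (Set.finite_Iic _) (by simpa using this)
    have := Filter.inter_mem (Filter.inter_mem h1 h2) h3
    obtain ⟨y, ⟨hy1, hy2⟩, hy3⟩ := Ultrafilter.nonempty_of_mem this
    refine ⟨y, hy1, fun x hx => ⟨hy3 x hx, ?_⟩⟩
    have : c x y = q x := by
      simp only [Set.mem_iInter, Set.mem_setOf_eq] at hy2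
      exact hy2 x hx
    rw [this, hs x hx]
  obtain ⟨f, hf1, hf2⟩ := exists_seq_of_forall_finset_exists
    (fun m => q m = q') (fun a b => a < b ∧ c a b = q') main
  exact ⟨f, fun m n hmn => (hf2 m n hmn).1, q', fun m n hmn => (hf2 m n hmn).2⟩

/-- For an unbounded ordinal metric, any infinite family of pairwise disjoint
`l`-element subsets of `X` has an infinite subfamily any two distinct members of
which are pointwise at `ρ`-distance `> k`. -/
theorem unbounded_free_subfamily (X : Set Ordinal) (ρ : Ordinal → Ordinal → ℕ)
    (h : IsOrdinalMetric X ρ) (hu : UnboundedMetric X ρ) (k : ℕ) :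
    ∀ l : ℕ, ∀ A : Set (Finset Ordinal), A.Infinite →
      (∀ a ∈ A, a.card = l) → (∀ a ∈ A, ↑a ⊆ X) →
      (∀ a ∈ A, ∀ b ∈ A, a ≠ b → Disjoint a b) →
      ∃ B ⊆ A, B.Infinite ∧
        ∀ a ∈ B, ∀ b ∈ B, a ≠ b → ∀ α ∈ a, ∀ β ∈ b, k < ρ α β := by
  classical
  obtain ⟨h1, h2, h3, h4⟩ := h
  intro l A hAinf hcard hsub hdisj
  set E : ℕ ↪ A := Set.Infinite.natEmbedding A hAinf with hE
  set e : ℕ → Finset Ordinal := fun n => (E n : Finset Ordinal) with he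
  have heA : ∀ n, e n ∈ A := fun n => (E n).2
  have heinj : Function.Injective e := fun m n hmn => by
    have := E.injective (Subtype.ext hmn); exact this
  have hedisj : ∀ {m n : ℕ}, m ≠ n → Disjoint (e m) (e n) := fun {m n} hmn =>
    hdisj _ (heA m) _ (heA n) (fun hc => hmn (heinj hc))
  set f : ℕ → Fin l → Ordinal :=
    fun n i => ((e n).orderIsoOfFin (hcard _ (heA n)) i : Ordinal) with hfdef
  have hf_mem : ∀ n i, f n i ∈ e n := fun n i => ((e n).orderIsoOfFin _ i).2
  have hf_surj : ∀ n, ∀ α ∈ e n, ∃ i, f n i = α := by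
    intro n α hα
    refine ⟨((e n).orderIsoOfFin (hcard _ (heA n))).symm ⟨α, hα⟩, ?_⟩
    exact congrArg Subtype.val
      (((e n).orderIsoOfFin (hcard _ (heA n))).apply_symm_apply ⟨α, hα⟩)
  have hfX : ∀ n i, f n i ∈ X := fun n i => hsub _ (heA n) (hf_mem n i)
  set c : ℕ → ℕ → Option (Fin l × Fin l) := fun m n =>
    if hc : ∃ p : Fin l × Fin l, ρ (f m p.1) (f n p.2) ≤ k then some hc.choose else none
    with hcdef
  have hc_some : ∀ m n p, c m n = some p → ρ (f m p.1) (f n p.2) ≤ k := by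
    intro m n p hp
    by_cases hc : ∃ p : Fin l × Fin l, ρ (f m p.1) (f n p.2) ≤ k
    · have hcc : c m n = some hc.choose := dif_pos hc
      rw [hcc] at hp
      injection hp with hp'
      exact hp' ▸ hc.choose_spec
    · have hcc : c m n = none := dif_neg hc
      rw [hcc] at hp; exact nomatch hp
  have hc_none : ∀ m n, c m n = none →
      ∀ p : Fin l × Fin l, k < ρ (f m p.1) (f n p.2) := by
    intro m n hn p
    by_cases hc : ∃ p : Fin l × Fin l, ρ (f m p.1) (f n p.2) ≤ k
    · have hcc : c m n = some hc.choose := dif_pos hc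
      rw [hcc] at hn; exact nomatch hn
    · push_neg at hc; exact hc p
  obtain ⟨g, hg, q, hq⟩ := infinite_ramsey_pairs c
  cases q with
  | none =>
    refine ⟨Set.range (fun n => e (g n)), ?_, ?_, ?_⟩
    · rintro a ⟨n, rfl⟩; exact heA (g n)
    · exact Set.infinite_range_of_injective (fun m n hmn => hg.injective (heinj hmn))
    · rintro a ⟨m, rfl⟩ b ⟨n, rfl⟩ hab α hα β hβ
      have hmn : m ≠ n := fun hc => hab (by rw [hc])
      obtain ⟨i, rfl⟩ := hf_surj (g m) α hα
      obtain ⟨j, rfl⟩ := hf_surj (g n) β hβ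
      rcases hmn.lt_or_gt with hlt | hlt
      · exact hc_none _ _ (hq m n hlt) (i, j)
      · have := hc_none _ _ (hq n m hlt) (j, i)
        rwa [h2 _ (hfX (g n) j) _ (hfX (g m) i)] at this
  | some p =>
    exfalso
    set x : ℕ → Ordinal := fun n => f (g n) p.1 with hx
    set y : ℕ → Ordinal := fun n => f (g n) p.2 with hy
    have hxy : ∀ m n, m < n → ρ (x m) (y n) ≤ k := fun m n hmn =>
      hc_some _ _ _ (hq m n hmn)
    have hxdisj : ∀ {m n : ℕ}, m ≠ n → ∀ i j, f (g m) i ≠ f (g n) j := by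
      intro m n hmn i j hcon
      have hd := hedisj (fun hc : g m = g n => hmn (hg.injective hc))
      exact (Finset.disjoint_left.1 hd) (hf_mem (g m) i) (hcon ▸ hf_mem (g n) j)
    have hxinj : Function.Injective x := by
      intro m n hmn
      by_contra hne
      exact hxdisj hne p.1 p.1 hmn
    have key : ∀ m n, m ≠ n → x m ≤ x n → ρ (x m) (x n) ≤ k := by
      intro m n hmn hle
      have hFin := h4 (x m) (hfX (g m) p.1) k
      -- find p' > max m n with x m ≤ y p'
      have : ∃ p' : ℕ, max m n < p' ∧ x m ≤ y p' := by
        by_contra hno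
        push_neg at hno
        have hsubF : y '' (Set.Ioi (max m n)) ⊆ {α | α ∈ X ∧ α ≤ x m ∧ ρ α (x m) ≤ k} := by
          rintro _ ⟨p', hp', rfl⟩
          have hlt := hno p' hp'
          refine ⟨hfX (g p') p.2, le_of_lt hlt, ?_⟩
          rw [h2 _ (hfX (g p') p.2) _ (hfX (g m) p.1)]
          exact hxy m p' (lt_of_le_of_lt (le_max_left m n) hp')
        have hyinjOn : Set.InjOn y (Set.Ioi (max m n)) := by
          intro a _ b _ hab
          by_contra hne
          exact hxdisj hne p.2 p.2 hab
        exact ((Set.Ioi_infinite _).image hyinjOn).mono hsubF hFin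
      obtain ⟨p', hp', hyp⟩ := this
      have hb1 : ρ (x m) (y p') ≤ k := hxy m p' (lt_of_le_of_lt (le_max_left m n) hp')
      have hb2 : ρ (x n) (y p') ≤ k := hxy n p' (lt_of_le_of_lt (le_max_right m n) hp')
      calc ρ (x m) (x n) ≤ max (ρ (x m) (y p')) (ρ (x n) (y p')) :=
            h3 _ (hfX (g m) p.1) _ (hfX (g n) p.1) _ (hfX (g p') p.2) hle hyp
        _ ≤ k := max_le hb1 hb2
    have key2 : ∀ m n, m ≠ n → ρ (x m) (x n) ≤ k := by
      intro m n hmn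
      rcases le_total (x m) (x n) with hle | hle
      · exact key m n hmn hle
      · rw [h2 _ (hfX (g m) p.1) _ (hfX (g n) p.1)]
        exact key n m hmn.symm hle
    obtain ⟨α, hα, β, hβ, hk⟩ := hu k (Set.range x)
      (by rintro _ ⟨n, rfl⟩; exact hfX (g n) p.1)
      (Set.infinite_range_of_injective hxinj)
    obtain ⟨m, rfl⟩ := hα
    obtain ⟨n, rfl⟩ := hβ
    rcases eq_or_ne m n with rfl | hmn
    · have : ρ (x m) (x m) = 0 := (h1 _ (hfX (g m) p.1) _ (hfX (g m) p.1)).2 rfl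
      omega
    · have := key2 m n hmn
      omega
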